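/- Let Δ be the simplicial complex on {1,...,d+2} (d ≥ 5) with facets [d+2]∖{1,j} for 2 ≤ j ≤ d and [d+2]∖{d+1,d+2}. Then the f-vector of Δ satisfies: the number of (d-1)-faces is d, and the h-vector of Δ is (1, 2, 1, 1, ..., 1, -1), where h_i = 1 for 2 ≤ i ≤ d-1 and h_d = -1. -/

import Mathlib

open Finset

lemma count_sup' (s S : Finset ℕ) (hS : S ⊆ s) (j : ℕ) :
    ((s.powersetCard (S.card + j)).filter (fun F => S ⊆ F)).card = (s \ S).card.choose j := by
  rw [← Finset.card_powersetCard j (s \ S)]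
  apply Finset.card_bij (fun F _ => F \ S)
  · intro F hF
    simp only [mem_filter, Finset.mem_powersetCard] at hF
    obtain ⟨⟨hFs, hcard⟩, hSF⟩ := hF
    rw [Finset.mem_powersetCard]
    exact ⟨Finset.sdiff_subset_sdiff hFs (le_refl _), by rw [Finset.card_sdiff_of_subset hSF, hcard]; omega⟩
  · intro F hF F' hF' hEq
    simp only [mem_filter, Finset.mem_powersetCard] at hF hF'
    have : F \ S ∪ S = F' \ S ∪ S := by rw [hEq]
    rwa [Finset.sdiff_union_of_subset hF.2, Finset.sdiff_union_of_subset hF'.2] at this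
  · intro G hG
    rw [Finset.mem_powersetCard] at hG
    have hdisj : Disjoint G S := Finset.disjoint_of_subset_left hG.1 (Finset.sdiff_disjoint)
    refine ⟨G ∪ S, ?_, ?_⟩
    · simp only [mem_filter, Finset.mem_powersetCard]
      refine ⟨⟨Finset.union_subset (hG.1.trans (Finset.sdiff_subset)) hS, ?_⟩, Finset.subset_union_right⟩
      rw [Finset.card_union_of_disjoint hdisj, hG.2]; omega
    · rw [Finset.union_sdiff_distrib, Finset.sdiff_self, Finset.union_empty,
        Finset.sdiff_eq_self_of_disjoint hdisj]

lemma U_eq' : ∀ n d k : ℕ, n ≤ d → k ≤ d →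
    ∑ i ∈ Finset.range (k + 1), (-1 : ℤ) ^ i * (n.choose i : ℤ) * ((d - i).choose (k - i) : ℤ)
      = ((d - n).choose k : ℤ) := by
  intro n
  induction n with
  | zero =>
    intro d k _ _
    rw [Finset.sum_eq_single 0]
    · simp
    · intro i _ hi
      rcases Nat.exists_eq_succ_of_ne_zero hi with ⟨m, rfl⟩
      simp
    · simp
  | succ n ih =>
    intro d k hn hk
    rcases k with _ | k
    · simp
    · have h1 := ih d (k + 1) (by omega) (by omega)
      have h2 := ih (d - 1) k (by omega) (by omega)
      rw [Finset.sum_range_succ'] at h1 ⊢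
      have e : ∀ i ∈ Finset.range (k + 1),
          (-1 : ℤ) ^ (i + 1) * ((n + 1).choose (i + 1) : ℤ) * ((d - (i + 1)).choose (k + 1 - (i + 1)) : ℤ)
            = (-1 : ℤ) ^ (i + 1) * (n.choose (i + 1) : ℤ) * ((d - (i + 1)).choose (k + 1 - (i + 1)) : ℤ)
              + (-((-1 : ℤ) ^ i * (n.choose i : ℤ) * ((d - 1 - i).choose (k - i) : ℤ))) := by
        intro i _
        have hd : d - (i + 1) = d - 1 - i := by omega
        have hk' : k + 1 - (i + 1) = k - i := by omega
        rw [hd, hk', Nat.choose_succ_succ']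
        push_cast
        ring
      rw [Finset.sum_congr rfl e, Finset.sum_add_distrib, Finset.sum_neg_distrib]
      have hp : ((d - n).choose (k + 1) : ℤ) = ((d - (n+1)).choose (k+1) : ℤ) + ((d - 1 - n).choose k : ℤ) := by
        have h3 : d - n = (d - (n + 1)) + 1 := by omega
        rw [h3, Nat.choose_succ_succ']
        have h4 : d - (n + 1) = d - 1 - n := by omega
        rw [h4]
        push_cast; ring
      simp only [pow_zero, Nat.choose_zero_right, Nat.cast_one, one_mul, Nat.sub_zero] at h1 ⊢
      linarith [h1, h2]

lemma U_succ' : ∀ k d : ℕ, k ≤ d →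
    ∑ i ∈ Finset.range (k + 1), (-1 : ℤ) ^ i * ((d + 1).choose i : ℤ) * ((d - i).choose (k - i) : ℤ)
      = (-1 : ℤ) ^ k := by
  intro k
  induction k with
  | zero => intro d _; simp
  | succ k ih =>
    intro d hk
    have h1 := U_eq' d d (k + 1) le_rfl (by omega)
    have h2 := ih (d - 1) (by omega)
    have hd1 : d - 1 + 1 = d := by omega
    rw [hd1] at h2
    rw [Finset.sum_range_succ'] at h1 ⊢
    have e : ∀ i ∈ Finset.range (k + 1),
        (-1 : ℤ) ^ (i + 1) * ((d + 1).choose (i + 1) : ℤ) * ((d - (i + 1)).choose (k + 1 - (i + 1)) : ℤ)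
          = (-1 : ℤ) ^ (i + 1) * (d.choose (i + 1) : ℤ) * ((d - (i + 1)).choose (k + 1 - (i + 1)) : ℤ)
            + (-((-1 : ℤ) ^ i * (d.choose i : ℤ) * ((d - 1 - i).choose (k - i) : ℤ))) := by
      intro i _
      have hdd : d - (i + 1) = d - 1 - i := by omega
      have hk' : k + 1 - (i + 1) = k - i := by omega
      rw [hdd, hk', Nat.choose_succ_succ']
      push_cast
      ring
    rw [Finset.sum_congr rfl e, Finset.sum_add_distrib, Finset.sum_neg_distrib]
    have hz : ((d - d).choose (k + 1) : ℤ) = 0 := by simp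
    simp only [pow_zero, Nat.choose_zero_right, Nat.cast_one, one_mul, Nat.sub_zero] at h1 ⊢
    rw [hz] at h1
    have h5 : (-1 : ℤ) ^ (k + 1) = -(-1 : ℤ) ^ k := by ring
    linarith [h1, h2]

lemma hsum_formula' (d k : ℕ) (hd : 1 ≤ d) (hk : k ≤ d) :
    ∑ i ∈ Finset.range (k+1), (-1:ℤ)^(k-i) * ((d-i).choose (k-i) : ℤ) *
        (((d+1).choose i : ℤ) + (d.choose i : ℤ) - ((d-1).choose i : ℤ))
      = 1 + (-1:ℤ)^k * (((0:ℕ).choose k : ℤ) - ((1:ℕ).choose k : ℤ)) := by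
  have hU1 := U_succ' k d hk
  have hU2 := U_eq' d d k le_rfl hk
  have hU3 := U_eq' (d-1) d k (by omega) hk
  rw [Nat.sub_self] at hU2
  rw [(by omega : d - (d-1) = 1)] at hU3
  have hsq : (-1:ℤ)^k * (-1)^k = 1 := by rw [← pow_add]; exact Even.neg_one_pow ⟨k, rfl⟩
  have e : ∀ i ∈ Finset.range (k+1),
      (-1:ℤ)^(k-i) * ((d-i).choose (k-i) : ℤ) *
        (((d+1).choose i : ℤ) + (d.choose i : ℤ) - ((d-1).choose i : ℤ))
      = ((-1:ℤ)^k * ((-1:ℤ)^i * ((d+1).choose i : ℤ) * ((d-i).choose (k-i) : ℤ))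
          + (-1:ℤ)^k * ((-1:ℤ)^i * (d.choose i : ℤ) * ((d-i).choose (k-i) : ℤ)))
        - (-1:ℤ)^k * ((-1:ℤ)^i * ((d-1).choose i : ℤ) * ((d-i).choose (k-i) : ℤ)) := by
    intro i hi
    rw [Finset.mem_range] at hi
    have h1 : (-1:ℤ)^(k-i) * (-1)^i = (-1)^k := by
      rw [← pow_add]; congr 1; omega
    have h2 : (-1:ℤ)^i * (-1)^i = 1 := by rw [← pow_add]; exact Even.neg_one_pow ⟨i, rfl⟩
    have hs : (-1:ℤ)^(k-i) = (-1)^k * (-1)^i := by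
      rw [← h1, mul_assoc, h2, mul_one]
    rw [hs]; ring
  rw [Finset.sum_congr rfl e, Finset.sum_sub_distrib, Finset.sum_add_distrib,
    ← Finset.mul_sum, ← Finset.mul_sum, ← Finset.mul_sum, hU1, hU2, hU3, hsq]
  ring

theorem stmt_14 (d : ℕ) (hd : 5 ≤ d)
    (Δ : Finset (Finset ℕ))
    (hΔ : Δ = (Finset.Icc 1 (d + 2)).powerset.filter (fun F =>
      (∃ j ∈ Finset.Icc 2 d, F ⊆ (Finset.Icc 1 (d + 2)) \ {1, j}) ∨
        F ⊆ (Finset.Icc 1 (d + 2)) \ {d + 1, d + 2}))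
    (f : ℕ → ℤ) (hf : ∀ i, f i = ((Δ.filter (fun F => F.card = i)).card : ℤ))
    (h : ℕ → ℤ)
    (hh : ∀ k, h k = ∑ i ∈ Finset.range (k + 1),
      (-1 : ℤ) ^ (k - i) * ((d - i).choose (k - i) : ℤ) * f i) :
    f d = d ∧ h 0 = 1 ∧ h 1 = 2 ∧ (∀ k, 2 ≤ k → k ≤ d - 1 → h k = 1) ∧ h d = -1 := by
  have hKW : Finset.Icc 2 d ⊆ Finset.Icc 2 (d+2) := by
    intro x; simp only [Finset.mem_Icc]; omega
  have hWcard : (Finset.Icc 2 (d+2)).card = d + 1 := by rw [Nat.card_Icc]; omega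
  have hKcard : (Finset.Icc 2 d).card = d - 1 := by rw [Nat.card_Icc]; omega
  have hLcard : (Finset.Icc 1 d).card = d := by rw [Nat.card_Icc]; omega
  have hWK : (Finset.Icc 2 (d+2) \ Finset.Icc 2 d).card = 2 := by
    have h1 : Finset.Icc 2 (d+2) \ Finset.Icc 2 d = Finset.Icc (d+1) (d+2) := by
      ext x; simp only [Finset.mem_Icc, Finset.mem_sdiff, not_and, not_le]; omega
    rw [h1, Nat.card_Icc]; omega
  -- union decomposition
  have hA : ∀ i, (Δ.filter (fun F => F.card = i)) =
      (((Finset.Icc 2 (d+2)).powersetCard i).filter (fun F => ¬ Finset.Icc 2 d ⊆ F)) ∪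
        ((Finset.Icc 1 d).powersetCard i) := by
    intro i
    rw [hΔ]
    ext F
    simp only [Finset.mem_filter, Finset.mem_powerset, Finset.mem_union, Finset.mem_powersetCard]
    constructor
    · rintro ⟨⟨hFV, hPQ⟩, hc⟩
      rcases hPQ with ⟨j, hj, hFj⟩ | hQ
      · left
        simp only [Finset.mem_Icc] at hj
        refine ⟨⟨?_, hc⟩, ?_⟩
        · intro x hx
          have := hFj hx
          simp only [Finset.mem_sdiff, Finset.mem_Icc, Finset.mem_insert, Finset.mem_singleton] at this
          simp only [Finset.mem_Icc]
          omega
        · intro hKF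
          have hjK : j ∈ Finset.Icc 2 d := by simp [Finset.mem_Icc]; omega
          have := hFj (hKF hjK)
          simp only [Finset.mem_sdiff, Finset.mem_Icc, Finset.mem_insert, Finset.mem_singleton] at this
          tauto
      · right
        refine ⟨?_, hc⟩
        intro x hx
        have := hQ hx
        simp only [Finset.mem_sdiff, Finset.mem_Icc, Finset.mem_insert, Finset.mem_singleton] at this
        simp only [Finset.mem_Icc]
        omega
    · rintro (⟨⟨hFW, hc⟩, hnK⟩ | ⟨hFL, hc⟩)
      · obtain ⟨j, hjK, hjF⟩ := Finset.not_subset.mp hnK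
        simp only [Finset.mem_Icc] at hjK
        refine ⟨⟨?_, Or.inl ⟨j, by simp [Finset.mem_Icc]; omega, ?_⟩⟩, hc⟩
        · intro x hx
          have := hFW hx
          simp only [Finset.mem_Icc] at this ⊢
          omega
        · intro x hx
          have := hFW hx
          simp only [Finset.mem_Icc] at this
          simp only [Finset.mem_sdiff, Finset.mem_Icc, Finset.mem_insert, Finset.mem_singleton]
          refine ⟨by omega, ?_⟩
          rintro (rfl | rfl)
          · omega
          · exact hjF hx
      · refine ⟨⟨?_, Or.inr ?_⟩, hc⟩
        · intro x hx
          have := hFL hx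
          simp only [Finset.mem_Icc] at this ⊢
          omega
        · intro x hx
          have := hFL hx
          simp only [Finset.mem_sdiff, Finset.mem_Icc, Finset.mem_insert, Finset.mem_singleton] at this ⊢
          omega
  -- intersection identity
  have hI : ∀ i, (((Finset.Icc 2 (d+2)).powersetCard i).filter (fun F => ¬ Finset.Icc 2 d ⊆ F)) ∩
        ((Finset.Icc 1 d).powersetCard i)
      = ((Finset.Icc 2 d).powersetCard i).filter (fun F => ¬ Finset.Icc 2 d ⊆ F) := by
    intro i
    ext F
    simp only [Finset.mem_inter, Finset.mem_filter, Finset.mem_powersetCard]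
    constructor
    · rintro ⟨⟨⟨hFW, hc⟩, hnK⟩, ⟨hFL, -⟩⟩
      refine ⟨⟨?_, hc⟩, hnK⟩
      intro x hx
      have h1 := hFW hx; have h2 := hFL hx
      simp only [Finset.mem_Icc] at h1 h2 ⊢
      omega
    · rintro ⟨⟨hFK, hc⟩, hnK⟩
      exact ⟨⟨⟨hFK.trans hKW, hc⟩, hnK⟩,
        ⟨hFK.trans (by intro x; simp only [Finset.mem_Icc]; omega), hc⟩⟩
  -- superset counts
  have heW0 : ∀ i, i ≤ d - 2 →
      (((Finset.Icc 2 (d+2)).powersetCard i).filter (fun F => Finset.Icc 2 d ⊆ F)).card = 0 := by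
    intro i hi
    rw [Finset.card_eq_zero, Finset.filter_eq_empty_iff]
    intro F hF hKF
    rw [Finset.mem_powersetCard] at hF
    have := Finset.card_le_card hKF
    rw [hF.2, hKcard] at this
    omega
  have heW1 : (((Finset.Icc 2 (d+2)).powersetCard (d-1)).filter (fun F => Finset.Icc 2 d ⊆ F)).card = 1 := by
    have h1 := count_sup' (Finset.Icc 2 (d+2)) (Finset.Icc 2 d) hKW 0
    rw [hKcard, hWK] at h1
    simpa using h1
  have heW2 : (((Finset.Icc 2 (d+2)).powersetCard d).filter (fun F => Finset.Icc 2 d ⊆ F)).card = 2 := by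
    have h1 := count_sup' (Finset.Icc 2 (d+2)) (Finset.Icc 2 d) hKW 1
    rw [hKcard, hWK] at h1
    have h2 : d - 1 + 1 = d := by omega
    rw [h2] at h1
    simpa using h1
  have heK0 : ∀ i, i ≤ d - 2 →
      (((Finset.Icc 2 d).powersetCard i).filter (fun F => Finset.Icc 2 d ⊆ F)).card = 0 := by
    intro i hi
    rw [Finset.card_eq_zero, Finset.filter_eq_empty_iff]
    intro F hF hKF
    rw [Finset.mem_powersetCard] at hF
    have := Finset.card_le_card hKF
    rw [hF.2, hKcard] at this
    omega
  have heK1 : (((Finset.Icc 2 d).powersetCard (d-1)).filter (fun F => Finset.Icc 2 d ⊆ F)).card = 1 := by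
    have h1 := count_sup' (Finset.Icc 2 d) (Finset.Icc 2 d) le_rfl 0
    rw [hKcard, Finset.sdiff_self] at h1
    simpa using h1
  have heK2 : (((Finset.Icc 2 d).powersetCard d).filter (fun F => Finset.Icc 2 d ⊆ F)).card = 0 := by
    have h1 := count_sup' (Finset.Icc 2 d) (Finset.Icc 2 d) le_rfl 1
    rw [hKcard, Finset.sdiff_self] at h1
    have h2 : d - 1 + 1 = d := by omega
    rw [h2] at h1
    simpa using h1
  -- face counts
  have hcount : ∀ i, (Δ.filter (fun F => F.card = i)).card +
        (((Finset.Icc 2 d).powersetCard i).filter (fun F => ¬ Finset.Icc 2 d ⊆ F)).card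
      = (((Finset.Icc 2 (d+2)).powersetCard i).filter (fun F => ¬ Finset.Icc 2 d ⊆ F)).card
        + ((Finset.Icc 1 d).powersetCard i).card := by
    intro i
    rw [hA i, ← hI i]
    exact Finset.card_union_add_card_inter _ _
  have hsplitW : ∀ i, (((Finset.Icc 2 (d+2)).powersetCard i).filter (fun F => Finset.Icc 2 d ⊆ F)).card
      + (((Finset.Icc 2 (d+2)).powersetCard i).filter (fun F => ¬ Finset.Icc 2 d ⊆ F)).card
      = (d+1).choose i := by
    intro i
    rw [Finset.card_filter_add_card_filter_not, Finset.card_powersetCard, hWcard]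
  have hsplitK : ∀ i, (((Finset.Icc 2 d).powersetCard i).filter (fun F => Finset.Icc 2 d ⊆ F)).card
      + (((Finset.Icc 2 d).powersetCard i).filter (fun F => ¬ Finset.Icc 2 d ⊆ F)).card
      = (d-1).choose i := by
    intro i
    rw [Finset.card_filter_add_card_filter_not, Finset.card_powersetCard, hKcard]
  have hBcard : ∀ i, ((Finset.Icc 1 d).powersetCard i).card = d.choose i := by
    intro i
    rw [Finset.card_powersetCard, hLcard]
  -- f values
  have hfval : ∀ i, i ≤ d - 1 → f i = ((d+1).choose i : ℤ) + (d.choose i : ℤ) - ((d-1).choose i : ℤ) := by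
    intro i hi
    have hc := hcount i
    have hw := hsplitW i
    have hk' := hsplitK i
    have hb := hBcard i
    rw [hf i]
    by_cases hieq : i = d - 1
    · subst hieq
      rw [heW1] at hw
      rw [heK1] at hk'
      push_cast
      omega
    · have hi2 : i ≤ d - 2 := by omega
      rw [heW0 i hi2] at hw
      rw [heK0 i hi2] at hk'
      push_cast
      omega
  have hfd : f d = d := by
    have hc := hcount d
    have hw := hsplitW d
    have hk' := hsplitK d
    have hb := hBcard d
    rw [heW2] at hw
    rw [heK2] at hk'
    rw [hf d]
    have h1 : (d+1).choose d = d + 1 := Nat.choose_succ_self_right d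
    have h2 : d.choose d = 1 := Nat.choose_self d
    have h3 : (d-1).choose d = 0 := Nat.choose_eq_zero_of_lt (by omega)
    rw [h1] at hw
    rw [h2] at hb
    rw [h3] at hk'
    push_cast
    omega
  -- h values for k ≤ d - 1
  have hgen : ∀ k, k ≤ d - 1 →
      h k = 1 + (-1:ℤ)^k * (((0:ℕ).choose k : ℤ) - ((1:ℕ).choose k : ℤ)) := by
    intro k hk
    have hc2 : ∑ i ∈ Finset.range (k+1), (-1:ℤ)^(k-i) * ((d-i).choose (k-i) : ℤ) * f i
        = ∑ i ∈ Finset.range (k+1), (-1:ℤ)^(k-i) * ((d-i).choose (k-i) : ℤ) *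
            (((d+1).choose i : ℤ) + (d.choose i : ℤ) - ((d-1).choose i : ℤ)) := by
      apply Finset.sum_congr rfl
      intro i hi
      rw [Finset.mem_range] at hi
      rw [hfval i (by omega)]
    rw [hh k, hc2]
    exact hsum_formula' d k (by omega) (by omega)
  refine ⟨hfd, ?_, ?_, ?_, ?_⟩
  · have := hgen 0 (by omega)
    simpa using this
  · have := hgen 1 (by omega)
    norm_num at this
    linarith
  · intro k hk2 hkd
    have := hgen k hkd
    rw [Nat.choose_eq_zero_of_lt (by omega : 0 < k), Nat.choose_eq_zero_of_lt (by omega : 1 < k)] at this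
    simpa using this
  · -- h d
    have hsg := hsum_formula' d d (by omega) le_rfl
    rw [Nat.choose_eq_zero_of_lt (by omega : 0 < d), Nat.choose_eq_zero_of_lt (by omega : 1 < d)] at hsg
    simp only [Nat.cast_zero, sub_zero, sub_self, mul_zero, add_zero] at hsg
    rw [Finset.sum_range_succ] at hsg
    rw [hh d, Finset.sum_range_succ]
    have hcongr : ∑ i ∈ Finset.range d, (-1:ℤ)^(d-i) * ((d-i).choose (d-i) : ℤ) * f i
        = ∑ i ∈ Finset.range d, (-1:ℤ)^(d-i) * ((d-i).choose (d-i) : ℤ) *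
            (((d+1).choose i : ℤ) + (d.choose i : ℤ) - ((d-1).choose i : ℤ)) := by
      apply Finset.sum_congr rfl
      intro i hi
      rw [Finset.mem_range] at hi
      rw [hfval i (by omega)]
    rw [hcongr, hfd]
    have h1 : (d+1).choose d = d + 1 := Nat.choose_succ_self_right d
    have h2 : d.choose d = 1 := Nat.choose_self d
    have h3 : (d-1).choose d = 0 := Nat.choose_eq_zero_of_lt (by omega)
    rw [h1, h2, h3] at hsg
    simp only [Nat.sub_self, pow_zero, Nat.choose_self, Nat.cast_one, one_mul, Nat.cast_zero,
      Nat.cast_add, sub_zero] at hsg ⊢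
    push_cast at hsg ⊢
    linarith
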